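/- arXiv:2210.14277 — 2 statements merged into one kernel-verified Lean document; each statement's English description precedes it below -/
import Mathlib

section
/- Let G be a finite simple graph and C an odd cycle in G of length 2k+1, and let N' be a matching on the contraction G/C. Then there is a matching N on G consisting of the edges corresponding to those of N' together with k edges of the cycle C, such that N/C = N' and |N| = |N'| + k; moreover, if the contracted vertex B is N'-matched, then every vertex of C is N-matched. -/
open SimpleGraph Walk

section helpers
variable {V : Type*} {G : SimpleGraph V}

lemma getVert_mem_support' {u v : V} (p : G.Walk u v) (i : ℕ) :
    p.getVert i ∈ p.support := by
  rw [SimpleGraph.Walk.mem_support_iff_exists_getVert]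
  by_cases h : i ≤ p.length
  · exact ⟨i, rfl, h⟩
  · exact ⟨p.length, by rw [p.getVert_of_length_le (le_of_not_ge h), p.getVert_length], le_rfl⟩

lemma edge_getVert_mem_edges {u v : V} (p : G.Walk u v) {i : ℕ} (hi : i < p.length) :
    s(p.getVert i, p.getVert (i + 1)) ∈ p.edges := by
  induction p generalizing i with
  | nil => simp at hi
  | cons h q ih =>
    cases i with
    | zero =>
      simp [SimpleGraph.Walk.getVert_zero, SimpleGraph.Walk.getVert_cons_succ,
        SimpleGraph.Walk.edges_cons]
    | succ n =>
      simp only [SimpleGraph.Walk.getVert_cons_succ, SimpleGraph.Walk.edges_cons]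
      right
      exact ih (by simpa [SimpleGraph.Walk.length_cons, Nat.succ_lt_succ_iff] using hi)

lemma getVert_eq_support_get {u v : V} (p : G.Walk u v) {i : ℕ} (hi : i ≤ p.length) :
    p.getVert i = p.support.get ⟨i, by rw [SimpleGraph.Walk.length_support]; omega⟩ := by
  induction p generalizing i with
  | nil =>
    simp only [SimpleGraph.Walk.length_nil, Nat.le_zero] at hi
    subst hi
    simp
  | cons h q ih =>
    cases i with
    | zero => simp
    | succ n =>
      simp only [SimpleGraph.Walk.getVert_cons_succ, SimpleGraph.Walk.support_cons]
      exact ih (by simpa [Nat.succ_le_succ_iff] using hi)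

lemma getVert_eq_tail_get {u v : V} (p : G.Walk u v) {n : ℕ} (h1 : 1 ≤ n) (h2 : n ≤ p.length) :
    p.getVert n = p.support.tail.get
      ⟨n - 1, by simp [List.length_tail, p.length_support]; omega⟩ := by
  rcases Nat.exists_eq_add_of_le h1 with ⟨m, rfl⟩
  have : 1 + m = m + 1 := by omega
  rw [getVert_eq_support_get p (by omega)]
  simp only [this]
  rw [List.get_tail]
  exact congrArg p.support.get (Fin.ext (by simp))

lemma cycle_getVert_inj {v : V} {p : G.Walk v v} (hp : p.IsCycle) {i j : ℕ}
    (hi : i < p.length) (hj : j < p.length) (h : p.getVert i = p.getVert j) : i = j := by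
  have hnd : p.support.tail.Nodup := hp.support_nodup
  by_cases hi0 : i = 0
  · by_cases hj0 : j = 0
    · omega
    · exfalso
      have h1 : p.getVert p.length = p.getVert j := by
        rw [p.getVert_length, ← h, hi0, p.getVert_zero]
      rw [getVert_eq_tail_get p (by omega) le_rfl, getVert_eq_tail_get p (by omega) (by omega)]
        at h1
      have := (List.Nodup.get_inj_iff hnd).mp h1
      simp only [Fin.mk.injEq] at this
      omega
  · by_cases hj0 : j = 0
    · exfalso
      have h1 : p.getVert i = p.getVert p.length := by
        rw [p.getVert_length, h, hj0, p.getVert_zero]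
      rw [getVert_eq_tail_get p (by omega) le_rfl, getVert_eq_tail_get p (by omega) (by omega)]
        at h1
      have := (List.Nodup.get_inj_iff hnd).mp h1
      simp only [Fin.mk.injEq] at this
      omega
    · have h1 := h
      rw [getVert_eq_tail_get p (by omega) (by omega),
        getVert_eq_tail_get p (by omega) (by omega)] at h1
      have := (List.Nodup.get_inj_iff hnd).mp h1
      simp only [Fin.mk.injEq] at this
      omega

lemma mem_support_iff_mem_tail {v x : V} (p : G.Walk v v) (hp : 0 < p.length) :
    x ∈ p.support ↔ x ∈ p.support.tail := by
  constructor
  · intro h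
    rw [p.support_eq_cons] at h
    rcases List.mem_cons.mp h with rfl | h
    · have : p.getVert p.length = x := p.getVert_length
      rw [getVert_eq_tail_get p (by omega) le_rfl] at this
      have hm := List.get_mem p.support.tail ⟨p.length - 1, by
        simp [List.length_tail, p.length_support]; omega⟩
      rw [this] at hm
      exact hm
    · exact h
  · intro h
    rw [p.support_eq_cons]
    exact List.mem_cons.mpr (Or.inr h)

lemma sym2_cases {α : Type*} (e : Sym2 α) : ∃ x y, e = s(x, y) := by
  induction e using Sym2.ind with
  | _ x y => exact ⟨x, y, rfl⟩

lemma mem_edgeSet_mp {α : Type*} {H : SimpleGraph α} {x y : α}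
    (h : s(x, y) ∈ H.edgeSet) : H.Adj x y := (SimpleGraph.mem_edgeSet H).mp h

lemma mem_edgeSet_mpr {α : Type*} {H : SimpleGraph α} {x y : α}
    (h : H.Adj x y) : s(x, y) ∈ H.edgeSet := (SimpleGraph.mem_edgeSet H).mpr h

lemma lift_mem_sym2 {α : Type*} {P : α → Prop} {u w x : α} (hu : P u) (hw : P w) (hx : P x)
    (h : x ∈ s(u, w)) :
    (some (⟨x, hx⟩ : Subtype P) : Option (Subtype P)) ∈
      s(some ⟨u, hu⟩, some ⟨w, hw⟩) := by
  rcases Sym2.mem_iff.mp h with rfl | rfl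
  · exact Sym2.mem_mk_left _ _
  · exact Sym2.mem_mk_right _ _

lemma none_not_mem_some_pair {β : Type*} (x y : β) :
    (none : Option β) ∉ s(some x, some y) := by simp

end helpers

/-- A vertex `v` is matched by the edge set `M` if it is an endpoint of some edge of `M`. -/
def Matched {V : Type*} (M : Set (Sym2 V)) (v : V) : Prop := ∃ e ∈ M, v ∈ e

/-- `M` is a matching on `G`: a set of edges of `G`, no two of which share a vertex. -/
def IsMatching {V : Type*} (G : SimpleGraph V) (M : Set (Sym2 V)) : Prop :=
  M ⊆ G.edgeSet ∧ ∀ e ∈ M, ∀ f ∈ M, e ≠ f → ∀ v : V, v ∈ e → v ∉ f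

/-- The contraction `G/C`: the simple graph on `(V ∖ C) ∪ {B}` (with `B = none` the new
vertex) in which two old vertices are adjacent iff they are adjacent in `G`, and `B` is
adjacent to an old vertex `u` iff some vertex of `C` is adjacent to `u` in `G`. -/
def contraction {V : Type*} (G : SimpleGraph V) (C : Set V) :
    SimpleGraph (Option {x : V // x ∉ C}) where
  Adj x y :=
    match x, y with
    | some u, some w => G.Adj u.1 w.1
    | some u, none => ∃ c ∈ C, G.Adj u.1 c
    | none, some w => ∃ c ∈ C, G.Adj w.1 c
    | none, none => False
  symm := by
    constructor
    rintro (_ | u) (_ | w) h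
    · exact h
    · exact h
    · exact h
    · exact G.adj_symm h
  loopless := by
    constructor
    rintro (_ | u) h
    · exact h
    · exact G.irrefl h

/-- The edge set `M/C` induced on `G/C` by an edge set `M` of `G`: the edges of `M` with no
endpoint in `C`, together with the edge `{B, u}` for each edge of `M` with exactly one
endpoint in `C`. -/
def contractEdges {V : Type*} (C : Set V) (M : Set (Sym2 V)) :
    Set (Sym2 (Option {x : V // x ∉ C})) :=
  {e | (∃ (u w : V) (hu : u ∉ C) (hw : w ∉ C),
          s(u, w) ∈ M ∧ e = s(some ⟨u, hu⟩, some ⟨w, hw⟩)) ∨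
       (∃ (u c : V) (hu : u ∉ C), c ∈ C ∧ s(u, c) ∈ M ∧ e = s(none, some ⟨u, hu⟩))}


theorem expand_matching {V : Type*} [Fintype V] (G : SimpleGraph V) {v : V}
    (c : G.Walk v v) (hc : c.IsCycle) (k : ℕ) (hk : c.length = 2 * k + 1)
    (N' : Set (Sym2 (Option {x : V // x ∉ {u | u ∈ c.support}})))
    (hN' : IsMatching (contraction G {u | u ∈ c.support}) N') :
    ∃ N : Set (Sym2 V), IsMatching G N ∧
      contractEdges {u | u ∈ c.support} N = N' ∧
      (N ∩ {e | e ∈ c.edges}).ncard = k ∧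
      (∀ e ∈ N, e ∈ c.edges ∨ ∃ x, x ∈ e ∧ x ∉ {u | u ∈ c.support}) ∧
      N.ncard = N'.ncard + k ∧
      (Matched N' none → ∀ u ∈ c.support, Matched N u) := by
  classical
  obtain ⟨hN'E, hN'M⟩ := hN'
  -- Step 1 : bridge data
  obtain ⟨a, ha, Br, hBrE, hBrshape, hBrss, hBrcon, hBrcard, hBrmatch⟩ :
      ∃ (a : V), a ∈ c.support ∧ ∃ Br : Set (Sym2 V),
        Br ⊆ G.edgeSet ∧
        (∀ e ∈ Br, ∃ u, u ∉ {u | u ∈ c.support} ∧ e = s(u, a)) ∧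
        Br.Subsingleton ∧
        contractEdges {u | u ∈ c.support} Br =
          {E | E ∈ N' ∧ (none : Option {x : V // x ∉ {u | u ∈ c.support}}) ∈ E} ∧
        Br.ncard =
          {E | E ∈ N' ∧ (none : Option {x : V // x ∉ {u | u ∈ c.support}}) ∈ E}.ncard ∧
        (Matched N' none → Matched Br a) := by
    by_cases hB : Matched N' (none : Option {x : V // x ∉ {u | u ∈ c.support}})
    · obtain ⟨eB, heB, hnoneB⟩ := hB
      obtain ⟨x0, y0, rfl⟩ := sym2_cases eB
      have hsome : ∃ w : {x : V // x ∉ {u | u ∈ c.support}},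
          s((none : Option {x : V // x ∉ {u | u ∈ c.support}}), some w) ∈ N' := by
        rcases Sym2.mem_iff.mp hnoneB with h | h
        · subst h
          cases y0 with
          | none => exact ((mem_edgeSet_mp (hN'E heB) : False)).elim
          | some w => exact ⟨w, heB⟩
        · subst h
          cases x0 with
          | none => exact ((mem_edgeSet_mp (hN'E heB) : False)).elim
          | some w => exact ⟨w, by rwa [Sym2.eq_swap] at heB⟩
      obtain ⟨w, hwN⟩ := hsome
      have hadj : ∃ c0 ∈ {u | u ∈ c.support}, G.Adj w.1 c0 :=
        (mem_edgeSet_mp (hN'E hwN) : ∃ c0 ∈ {u | u ∈ c.support}, G.Adj w.1 c0)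
      obtain ⟨a, haS, hadj⟩ := hadj
      have hBm : Matched N' (none : Option {x : V // x ∉ {u | u ∈ c.support}}) :=
        ⟨_, hwN, Sym2.mem_mk_left _ _⟩
      have huniq : ∀ E ∈ N',
          (none : Option {x : V // x ∉ {u | u ∈ c.support}}) ∈ E →
          E = s(none, some w) := by
        intro E hE hnE
        by_contra hne
        exact hN'M E hE _ hwN hne none hnE (Sym2.mem_mk_left _ _)
      have hset : {E | E ∈ N' ∧ (none : Option {x : V // x ∉ {u | u ∈ c.support}}) ∈ E} =
          {s((none : Option {x : V // x ∉ {u | u ∈ c.support}}), some w)} := by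
        ext E
        simp only [Set.mem_setOf_eq, Set.mem_singleton_iff]
        constructor
        · rintro ⟨hE, hnE⟩; exact huniq E hE hnE
        · rintro rfl; exact ⟨hwN, Sym2.mem_mk_left _ _⟩
      refine ⟨a, haS, {s(w.1, a)}, ?_, ?_, Set.subsingleton_singleton, ?_, ?_, ?_⟩
      · intro e he
        have he' : e = s(w.1, a) := he
        subst he'
        exact mem_edgeSet_mpr hadj
      · intro e he
        exact ⟨w.1, w.2, he⟩
      · rw [hset]
        ext E
        simp only [contractEdges, Set.mem_setOf_eq, Set.mem_singleton_iff]
        constructor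
        · rintro (⟨u', w', hu', hw', hmem, rfl⟩ | ⟨u', c0, hu', hc0, hmem, rfl⟩)
          · have hmem' : s(u', w') = s(w.1, a) := hmem
            rcases Sym2.eq_iff.mp hmem' with ⟨h1, h2⟩ | ⟨h1, h2⟩
            · exact absurd haS (h2 ▸ hw')
            · exact absurd haS (h1 ▸ hu')
          · have hmem' : s(u', c0) = s(w.1, a) := hmem
            rcases Sym2.eq_iff.mp hmem' with ⟨h1, h2⟩ | ⟨h1, h2⟩
            · have : (⟨u', hu'⟩ : {x : V // x ∉ {u | u ∈ c.support}}) = w :=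
                Subtype.ext h1
              rw [this]
            · exact absurd haS (h1 ▸ hu')
        · rintro rfl
          exact Or.inr ⟨w.1, a, w.2, haS, rfl, rfl⟩
      · rw [hset, Set.ncard_singleton, Set.ncard_singleton]
      · intro _
        exact ⟨s(w.1, a), rfl, Sym2.mem_mk_right _ _⟩
    · have hempty :
          {E | E ∈ N' ∧ (none : Option {x : V // x ∉ {u | u ∈ c.support}}) ∈ E} = ∅ := by
        ext E
        simp only [Set.mem_setOf_eq, Set.mem_empty_iff_false, iff_false, not_and]
        intro hE hnE
        exact hB ⟨E, hE, hnE⟩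
      refine ⟨v, c.start_mem_support, ∅, by simp, by simp, Set.subsingleton_empty, ?_, ?_,
        fun h => absurd h hB⟩
      · rw [hempty]
        ext E
        simp only [contractEdges, Set.mem_setOf_eq, Set.mem_empty_iff_false, iff_false]
        rintro (⟨u', w', hu', hw', hmem, rfl⟩ | ⟨u', c0, hu', hc0, hmem, rfl⟩) <;>
          exact hmem.elim
      · rw [hempty]
        simp
  -- Step 2 : rotated cycle
  have hlenpos : 0 < c.length := by omega
  have hc₂ : (c.rotate a ha).IsCycle := hc.rotate ha
  have hrot : (c.rotate a ha).edges ~r c.edges := c.rotate_edges a ha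
  have hlen₂ : (c.rotate a ha).length = 2 * k + 1 := by
    have h1 : (c.rotate a ha).edges.length = c.edges.length := hrot.perm.length_eq
    rwa [SimpleGraph.Walk.length_edges, SimpleGraph.Walk.length_edges, hk] at h1
  have hsup : ∀ x, x ∈ (c.rotate a ha).support ↔ x ∈ c.support := by
    intro x
    rw [mem_support_iff_mem_tail (c.rotate a ha) (by omega),
      mem_support_iff_mem_tail c (by omega)]
    exact (SimpleGraph.Walk.support_rotate c a ha).mem_iff
  have hg0 : (c.rotate a ha).getVert 0 = a := (c.rotate a ha).getVert_zero
  have hglast : (c.rotate a ha).getVert (2 * k + 1) = a := by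
    rw [← hlen₂]; exact (c.rotate a ha).getVert_length
  have hginj : ∀ i j, i < 2 * k + 1 → j < 2 * k + 1 →
      (c.rotate a ha).getVert i = (c.rotate a ha).getVert j → i = j := by
    intro i j hi hj h
    exact cycle_getVert_inj hc₂ (by rw [hlen₂]; omega) (by rw [hlen₂]; omega) h
  have hgS : ∀ i, (c.rotate a ha).getVert i ∈ c.support :=
    fun i => (hsup _).mp (getVert_mem_support' (c.rotate a ha) i)
  have hgna : ∀ i, 1 ≤ i → i ≤ 2 * k → (c.rotate a ha).getVert i ≠ a := by
    intro i h1 h2 h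
    have := hginj i 0 (by omega) (by omega) (by rw [h, hg0])
    omega
  have hedgec : ∀ i, i < k →
      s((c.rotate a ha).getVert (2 * i + 1), (c.rotate a ha).getVert (2 * i + 2)) ∈ c.edges := by
    intro i hik
    have h := edge_getVert_mem_edges (c.rotate a ha) (i := 2 * i + 1) (by rw [hlen₂]; omega)
    rw [show 2 * i + 1 + 1 = 2 * i + 2 from by omega] at h
    exact hrot.mem_iff.mp h
  have hadjc : ∀ i, i < k →
      G.Adj ((c.rotate a ha).getVert (2 * i + 1)) ((c.rotate a ha).getVert (2 * i + 2)) :=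
    fun i hik => c.adj_of_mem_edges (hedgec i hik)
  have hcover : ∀ u, u ∈ c.support → u ≠ a → ∃ i, i < k ∧
      (u = (c.rotate a ha).getVert (2 * i + 1) ∨ u = (c.rotate a ha).getVert (2 * i + 2)) := by
    intro u hu hua
    obtain ⟨n, hgn, hn⟩ :=
      SimpleGraph.Walk.mem_support_iff_exists_getVert.mp ((hsup u).mpr hu)
    rw [hlen₂] at hn
    have hn0 : n ≠ 0 := by rintro rfl; rw [hg0] at hgn; exact hua hgn.symm
    have hnl : n ≠ 2 * k + 1 := by rintro rfl; rw [hglast] at hgn; exact hua hgn.symm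
    rcases Nat.even_or_odd n with ⟨m, hm⟩ | ⟨m, hm⟩
    · refine ⟨m - 1, by omega, Or.inr ?_⟩
      rw [show 2 * (m - 1) + 2 = n from by omega]
      exact hgn.symm
    · refine ⟨m, by omega, Or.inl ?_⟩
      rw [show 2 * m + 1 = n from by omega]
      exact hgn.symm
  -- Step 3 : the matching
  set base : Set (Sym2 V) :=
    {e | ∃ (u w : V) (hu : u ∉ {u | u ∈ c.support}) (hw : w ∉ {u | u ∈ c.support}),
      e = s(u, w) ∧ s(some ⟨u, hu⟩, some ⟨w, hw⟩) ∈ N'} with hbase_def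
  set cyc : Set (Sym2 V) :=
    {e | ∃ i, i < k ∧ e = s((c.rotate a ha).getVert (2 * i + 1),
      (c.rotate a ha).getVert (2 * i + 2))} with hcyc_def
  -- basic facts
  have hbase_ns : ∀ e ∈ base, ∀ x, x ∈ e → x ∉ c.support := by
    rintro e ⟨u, w, hu, hw, rfl, hE⟩ x hx
    rcases Sym2.mem_iff.mp hx with rfl | rfl
    · exact hu
    · exact hw
  have hcyc_s : ∀ e ∈ cyc, ∀ x, x ∈ e → x ∈ c.support := by
    rintro e ⟨i, hik, rfl⟩ x hx
    rcases Sym2.mem_iff.mp hx with rfl | rfl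
    · exact hgS _
    · exact hgS _
  have hcyc_na : ∀ e ∈ cyc, ∀ x, x ∈ e → x ≠ a := by
    rintro e ⟨i, hik, rfl⟩ x hx
    rcases Sym2.mem_iff.mp hx with rfl | rfl
    · exact hgna _ (by omega) (by omega)
    · exact hgna _ (by omega) (by omega)
  have hcyc_edges : ∀ e ∈ cyc, e ∈ c.edges := by
    rintro e ⟨i, hik, rfl⟩
    exact hedgec i hik
  have hBr_lift : ∀ (u : V) (hu : u ∉ {u | u ∈ c.support}), s(u, a) ∈ Br →
      s((none : Option {x : V // x ∉ {u | u ∈ c.support}}), some ⟨u, hu⟩) ∈ N' := by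
    intro u hu hmem
    have : s((none : Option {x : V // x ∉ {u | u ∈ c.support}}), some ⟨u, hu⟩) ∈
        contractEdges {u | u ∈ c.support} Br :=
      Or.inr ⟨u, a, hu, ha, hmem, rfl⟩
    rw [hBrcon] at this
    exact this.1
  -- disjointness cross facts
  have cross_base_cyc : ∀ e ∈ base, ∀ f ∈ cyc, ∀ x, x ∈ e → x ∈ f → False :=
    fun e he f hf x hxe hxf => hbase_ns e he x hxe (hcyc_s f hf x hxf)
  have cross_br_cyc : ∀ e ∈ Br, ∀ f ∈ cyc, ∀ x, x ∈ e → x ∈ f → False := by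
    intro e he f hf x hxe hxf
    obtain ⟨u, hu, rfl⟩ := hBrshape e he
    rcases Sym2.mem_iff.mp hxe with rfl | rfl
    · exact hu (hcyc_s f hf x hxf)
    · exact hcyc_na f hf x hxf rfl
  have cross_base_br : ∀ e ∈ base, ∀ f ∈ Br, ∀ x, x ∈ e → x ∈ f → False := by
    intro e he f hf x hxe hxf
    obtain ⟨u, w, hu, hw, rfl, hE⟩ := he
    obtain ⟨u', hu', rfl⟩ := hBrshape f hf
    have hxS : x ∉ {u | u ∈ c.support} :=
      hbase_ns _ ⟨u, w, hu, hw, rfl, hE⟩ x hxe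
    have hxu' : x = u' := by
      rcases Sym2.mem_iff.mp hxf with h | h
      · exact h
      · exact absurd (h ▸ ha) hxS
    subst hxu'
    have hF := hBr_lift x hxS hf
    have hne : s(some ⟨u, hu⟩, some ⟨w, hw⟩) ≠
        s((none : Option {y : V // y ∉ {u | u ∈ c.support}}), some ⟨x, hxS⟩) := by
      intro h
      have : (none : Option {y : V // y ∉ {u | u ∈ c.support}}) ∈
          s(some ⟨u, hu⟩, some ⟨w, hw⟩) := h ▸ Sym2.mem_mk_left _ _
      exact none_not_mem_some_pair _ _ this
    have hxE : (some (⟨x, hxS⟩ : {y : V // y ∉ {u | u ∈ c.support}})) ∈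
        s(some ⟨u, hu⟩, some ⟨w, hw⟩) := lift_mem_sym2 (P := fun y => y ∉ {u | u ∈ c.support}) hu hw hxS hxe
    have hFmem : s((none : Option {y : V // y ∉ {u | u ∈ c.support}}), some ⟨x, hxS⟩) ∈ N' := by
      exact hF
    exact hN'M _ hE _ hFmem hne (some ⟨x, hxS⟩) hxE (Sym2.mem_mk_right _ _)
  have base_base : ∀ e ∈ base, ∀ f ∈ base, e ≠ f → ∀ x, x ∈ e → x ∈ f → False := by
    intro e he f hf hef x hxe hxf
    obtain ⟨u, w, hu, hw, rfl, hE⟩ := he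
    obtain ⟨u', w', hu', hw', rfl, hF⟩ := hf
    have hne : (s(some ⟨u, hu⟩, some ⟨w, hw⟩) :
        Sym2 (Option {y : V // y ∉ {u | u ∈ c.support}})) ≠
        s(some ⟨u', hu'⟩, some ⟨w', hw'⟩) := by
      intro h
      apply hef
      rcases Sym2.eq_iff.mp h with ⟨h1, h2⟩ | ⟨h1, h2⟩ <;>
        simp only [Option.some.injEq, Subtype.mk.injEq] at h1 h2
      · rw [h1, h2]
      · rw [h1, h2, Sym2.eq_swap]
    have hx : x ∉ {u | u ∈ c.support} := by
      rcases Sym2.mem_iff.mp hxe with rfl | rfl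
      · exact hu
      · exact hw
    exact hN'M _ hE _ hF hne (some ⟨x, hx⟩) (lift_mem_sym2 (P := fun y => y ∉ {u | u ∈ c.support}) hu hw hx hxe) (lift_mem_sym2 (P := fun y => y ∉ {u | u ∈ c.support}) hu' hw' hx hxf)
  have cyc_cyc : ∀ e ∈ cyc, ∀ f ∈ cyc, e ≠ f → ∀ x, x ∈ e → x ∈ f → False := by
    intro e he f hf hef x hxe hxf
    obtain ⟨i, hik, rfl⟩ := he
    obtain ⟨j, hjk, rfl⟩ := hf
    have hij : i ≠ j := by rintro rfl; exact hef rfl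
    rcases Sym2.mem_iff.mp hxe with rfl | rfl <;>
      rcases Sym2.mem_iff.mp hxf with h | h <;>
      · have := hginj _ _ (by omega) (by omega) h
        omega
  have hcyck : cyc.ncard = k := by
    have himg : cyc = (fun i => s((c.rotate a ha).getVert (2 * i + 1),
        (c.rotate a ha).getVert (2 * i + 2))) '' (Set.Iio k) := by
      ext e
      simp only [Set.mem_image, Set.mem_Iio]
      constructor
      · rintro ⟨i, hik, rfl⟩
        exact ⟨i, hik, rfl⟩
      · rintro ⟨i, hik, rfl⟩
        exact ⟨i, hik, rfl⟩
    have hinj : Set.InjOn (fun i => s((c.rotate a ha).getVert (2 * i + 1),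
        (c.rotate a ha).getVert (2 * i + 2))) (Set.Iio k) := by
      intro i hi j hj h
      simp only [Set.mem_Iio] at hi hj
      have h' : s((c.rotate a ha).getVert (2 * i + 1), (c.rotate a ha).getVert (2 * i + 2)) =
          s((c.rotate a ha).getVert (2 * j + 1), (c.rotate a ha).getVert (2 * j + 2)) := h
      rcases Sym2.eq_iff.mp h' with ⟨h1, h2⟩ | ⟨h1, h2⟩
      · have := hginj _ _ (by omega) (by omega) h1
        omega
      · have := hginj _ _ (by omega) (by omega) h1
        omega
    rw [himg, Set.ncard_image_of_injOn hinj, ← Finset.coe_range, Set.ncard_coe_finset,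
      Finset.card_range]
  refine ⟨base ∪ Br ∪ cyc, ⟨?_, ?_⟩, ?_, ?_, ?_, ?_, ?_⟩
  · -- subset of edges
    rintro e ((he | he) | he)
    · obtain ⟨u, w, hu, hw, rfl, hE⟩ := he
      exact mem_edgeSet_mpr (mem_edgeSet_mp (hN'E hE) : G.Adj u w)
    · exact hBrE he
    · exact c.edges_subset_edgeSet (hcyc_edges e he)
  · -- pairwise disjoint
    rintro e he f hf hef x hxe hxf
    rcases he with (he | he) | he <;> rcases hf with (hf | hf) | hf
    · exact base_base e he f hf hef x hxe hxf
    · exact cross_base_br e he f hf x hxe hxf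
    · exact cross_base_cyc e he f hf x hxe hxf
    · exact cross_base_br f hf e he x hxf hxe
    · exact hef (hBrss he hf)
    · exact cross_br_cyc e he f hf x hxe hxf
    · exact cross_base_cyc f hf e he x hxf hxe
    · exact cross_br_cyc f hf e he x hxf hxe
    · exact cyc_cyc e he f hf hef x hxe hxf
  · -- contractEdges N = N'
    ext E
    constructor
    · rintro (⟨u, w, hu, hw, hmem, rfl⟩ | ⟨u, c0, hu, hc0, hmem, rfl⟩)
      · rcases hmem with (hm | hm) | hm
        · obtain ⟨u', w', hu', hw', heq, hE⟩ := hm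
          rcases Sym2.eq_iff.mp heq with ⟨h1, h2⟩ | ⟨h1, h2⟩
          · subst h1; subst h2; exact hE
          · subst h1; subst h2
            rw [Sym2.eq_swap] at hE
            exact hE
        · obtain ⟨u₀, hu₀, heq⟩ := hBrshape _ hm
          rcases Sym2.eq_iff.mp heq with ⟨h1, h2⟩ | ⟨h1, h2⟩
          · rw [h2] at hw; exact absurd ha hw
          · rw [h1] at hu; exact absurd ha hu
        · exact absurd (hcyc_s _ hm u (Sym2.mem_mk_left _ _)) hu
      · rcases hmem with (hm | hm) | hm
        · obtain ⟨u', w', hu', hw', heq, hE⟩ := hm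
          rcases Sym2.eq_iff.mp heq with ⟨h1, h2⟩ | ⟨h1, h2⟩
          · rw [h2] at hc0; exact absurd hc0 hw'
          · rw [h2] at hc0; exact absurd hc0 hu'
        · have hmm : s((none : Option {x : V // x ∉ {u | u ∈ c.support}}), some ⟨u, hu⟩) ∈
              contractEdges {u | u ∈ c.support} Br := Or.inr ⟨u, c0, hu, hc0, hm, rfl⟩
          rw [hBrcon] at hmm
          exact hmm.1
        · exact absurd (hcyc_s _ hm u (Sym2.mem_mk_left _ _)) hu
    · intro hE
      by_cases hnE : (none : Option {x : V // x ∉ {u | u ∈ c.support}}) ∈ E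
      · have hmm : E ∈ contractEdges {u | u ∈ c.support} Br := by
          rw [hBrcon]; exact ⟨hE, hnE⟩
        rcases hmm with ⟨u, w, hu, hw, hm, rfl⟩ | ⟨u, c0, hu, hc0, hm, rfl⟩
        · exact Or.inl ⟨u, w, hu, hw, Set.mem_union_left _ (Set.mem_union_right _ hm), rfl⟩
        · exact Or.inr ⟨u, c0, hu, hc0, Set.mem_union_left _ (Set.mem_union_right _ hm), rfl⟩
      · obtain ⟨x0, y0, rfl⟩ := sym2_cases E
        cases x0 with
        | none => exact absurd (Sym2.mem_mk_left _ _) hnE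
        | some x =>
          cases y0 with
          | none => exact absurd (Sym2.mem_mk_right _ _) hnE
          | some y =>
            refine Or.inl ⟨x.1, y.1, x.2, y.2, ?_, rfl⟩
            exact Set.mem_union_left _ (Set.mem_union_left _ ⟨x.1, y.1, x.2, y.2, rfl, hE⟩)
  · -- card of intersection with cycle edges
    have hcap : (base ∪ Br ∪ cyc) ∩ {e | e ∈ c.edges} = cyc := by
      ext e
      constructor
      · rintro ⟨(he | he) | he, hce⟩
        · obtain ⟨u, w, hu, hw, rfl, hE⟩ := he
          exact absurd (c.fst_mem_support_of_mem_edges hce) hu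
        · obtain ⟨u, hu, heq⟩ := hBrshape e he
          subst heq
          exact absurd (c.fst_mem_support_of_mem_edges hce) hu
        · exact he
      · intro he
        exact ⟨Set.mem_union_right _ he, hcyc_edges e he⟩
    rw [hcap, hcyck]
  · -- structure of edges
    rintro e ((he | he) | he)
    · obtain ⟨u, w, hu, hw, rfl, hE⟩ := he
      exact Or.inr ⟨u, Sym2.mem_mk_left _ _, hu⟩
    · obtain ⟨u, hu, rfl⟩ := hBrshape e he
      exact Or.inr ⟨u, Sym2.mem_mk_left _ _, hu⟩
    · exact Or.inl (hcyc_edges e he)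
  · -- cardinality
    haveI : Finite (Sym2 V) := Finite.of_fintype _
    have hdisj2 : Disjoint base Br := by
      rw [Set.disjoint_left]
      intro e he hec
      obtain ⟨x0, y0, rfl⟩ := sym2_cases e
      exact cross_base_br _ he _ hec x0 (Sym2.mem_mk_left _ _) (Sym2.mem_mk_left _ _)
    have hdisj1 : Disjoint (base ∪ Br) cyc := by
      rw [Set.disjoint_left]
      intro e he hec
      obtain ⟨x0, y0, rfl⟩ := sym2_cases e
      rcases he with he | he
      · exact cross_base_cyc _ he _ hec x0 (Sym2.mem_mk_left _ _) (Sym2.mem_mk_left _ _)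
      · exact cross_br_cyc _ he _ hec x0 (Sym2.mem_mk_left _ _) (Sym2.mem_mk_left _ _)
    have hbase_img : base = Sym2.map (fun o => Option.elim o a Subtype.val) ''
        {E | E ∈ N' ∧ (none : Option {x : V // x ∉ {u | u ∈ c.support}}) ∉ E} := by
      ext e
      constructor
      · rintro ⟨u, w, hu, hw, rfl, hE⟩
        refine ⟨s(some ⟨u, hu⟩, some ⟨w, hw⟩), ⟨hE, none_not_mem_some_pair _ _⟩, ?_⟩
        rw [Sym2.map_pair_eq]
        rfl
      · rintro ⟨E, ⟨hE, hnE⟩, rfl⟩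
        obtain ⟨x0, y0, rfl⟩ := sym2_cases E
        cases x0 with
        | none => exact absurd (Sym2.mem_mk_left _ _) hnE
        | some x =>
          cases y0 with
          | none => exact absurd (Sym2.mem_mk_right _ _) hnE
          | some y =>
            rw [Sym2.map_pair_eq]
            exact ⟨x.1, y.1, x.2, y.2, rfl, hE⟩
    have hbase_inj : Set.InjOn (Sym2.map (fun o => Option.elim o a Subtype.val))
        {E | E ∈ N' ∧ (none : Option {x : V // x ∉ {u | u ∈ c.support}}) ∉ E} := by
      rintro E ⟨hE, hnE⟩ F ⟨hF, hnF⟩ h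
      obtain ⟨x0, y0, rfl⟩ := sym2_cases E
      obtain ⟨x1, y1, rfl⟩ := sym2_cases F
      cases x0 with
      | none => exact absurd (Sym2.mem_mk_left _ _) hnE
      | some x =>
        cases y0 with
        | none => exact absurd (Sym2.mem_mk_right _ _) hnE
        | some y =>
          cases x1 with
          | none => exact absurd (Sym2.mem_mk_left _ _) hnF
          | some x' =>
            cases y1 with
            | none => exact absurd (Sym2.mem_mk_right _ _) hnF
            | some y' =>
              rw [Sym2.map_pair_eq, Sym2.map_pair_eq] at h
              rcases Sym2.eq_iff.mp h with ⟨h1, h2⟩ | ⟨h1, h2⟩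
              · rw [Subtype.ext h1, Subtype.ext h2]
              · rw [Subtype.ext h1, Subtype.ext h2, Sym2.eq_swap]
    have hN'union : N' = {E | E ∈ N' ∧ (none : Option {x : V // x ∉ {u | u ∈ c.support}}) ∈ E} ∪
        {E | E ∈ N' ∧ (none : Option {x : V // x ∉ {u | u ∈ c.support}}) ∉ E} := by
      ext E
      constructor
      · intro hE
        by_cases hnE : (none : Option {x : V // x ∉ {u | u ∈ c.support}}) ∈ E
        · exact Or.inl ⟨hE, hnE⟩
        · exact Or.inr ⟨hE, hnE⟩
      · rintro (⟨hE, _⟩ | ⟨hE, _⟩) <;> exact hE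
    have hN'disj : Disjoint
        {E | E ∈ N' ∧ (none : Option {x : V // x ∉ {u | u ∈ c.support}}) ∈ E}
        {E | E ∈ N' ∧ (none : Option {x : V // x ∉ {u | u ∈ c.support}}) ∉ E} := by
      rw [Set.disjoint_left]
      rintro E ⟨_, h1⟩ ⟨_, h2⟩
      exact h2 h1
    have hN'card : N'.ncard =
        {E | E ∈ N' ∧ (none : Option {x : V // x ∉ {u | u ∈ c.support}}) ∈ E}.ncard +
        {E | E ∈ N' ∧ (none : Option {x : V // x ∉ {u | u ∈ c.support}}) ∉ E}.ncard := by
      conv_lhs => rw [hN'union]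
      exact Set.ncard_union_eq hN'disj (Set.toFinite _) (Set.toFinite _)
    rw [Set.ncard_union_eq hdisj1 (Set.toFinite _) (Set.toFinite _),
      Set.ncard_union_eq hdisj2 (Set.toFinite _) (Set.toFinite _),
      hbase_img, Set.ncard_image_of_injOn hbase_inj, hcyck, hBrcard, hN'card]
    omega
  · -- matched
    intro hB u hu
    by_cases hua : u = a
    · obtain ⟨e, he, hae⟩ := hBrmatch hB
      exact ⟨e, Or.inl (Or.inr he), hua ▸ hae⟩
    · obtain ⟨i, hik, h⟩ := hcover u hu hua
      refine ⟨s((c.rotate a ha).getVert (2 * i + 1), (c.rotate a ha).getVert (2 * i + 2)),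
        Or.inr ⟨i, hik, rfl⟩, ?_⟩
      rcases h with rfl | rfl
      · exact Sym2.mem_mk_left _ _
      · exact Sym2.mem_mk_right _ _
end

section
/- Let G be a finite simple graph, let M̂ be a regal matching on the crown Crown(G), and let m be an M̂-unmatched monde vertex. If there exists an M̂-augmenting path in Crown(G), then there exists an M̂-alternating cycle rooted at m; that is, a closed walk at m of odd length with pairwise distinct edges, visiting no vertex other than m twice, whose edges alternate between not in M̂ and in M̂, beginning and ending with edges not in M̂. -/
/-- The crown of `G`: three disjoint copies of the vertex set of `G` — the circlet
(`Sum.inl`), the arches (`Sum.inr ∘ Sum.inl`) and the monde (`Sum.inr ∘ Sum.inr`).  Two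
circlet vertices are adjacent iff the corresponding vertices are adjacent in `G`; each
circlet vertex is adjacent to its own arch copy; every arch vertex is adjacent to every
monde vertex; there are no other edges. -/
def crown {V : Type*} (G : SimpleGraph V) : SimpleGraph (V ⊕ V ⊕ V) where
  Adj x y :=
    match x, y with
    | Sum.inl u, Sum.inl w => G.Adj u w
    | Sum.inl u, Sum.inr (Sum.inl w) => u = w
    | Sum.inr (Sum.inl u), Sum.inl w => u = w
    | Sum.inr (Sum.inl _), Sum.inr (Sum.inr _) => True
    | Sum.inr (Sum.inr _), Sum.inr (Sum.inl _) => True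
    | _, _ => False
  symm := ⟨by
    rintro (u | u | u) (w | w | w) h <;>
      first
        | exact G.adj_symm h
        | exact Eq.symm h
        | exact False.elim h
        | trivial⟩
  loopless := ⟨by
    rintro (u | u | u) h
    · exact G.irrefl h
    · exact False.elim h
    · exact False.elim h⟩

/-- A matching on the crown is regal if every circlet vertex and every arch vertex is
matched. -/
def IsRegal {V : Type*} (Mh : Set (Sym2 (V ⊕ V ⊕ V))) : Prop :=
  (∀ u : V, Matched Mh (Sum.inl u)) ∧ (∀ u : V, Matched Mh (Sum.inr (Sum.inl u)))

/-- An `M`-augmenting path: a path with at least one edge, whose edges alternate between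
not in `M` and in `M`, and whose endpoints are `M`-unmatched. -/
def IsAugPath {V : Type*} (G : SimpleGraph V) (M : Set (Sym2 V)) {a b : V}
    (p : G.Walk a b) : Prop :=
  p.IsPath ∧ p.edges ≠ [] ∧
    List.Chain' (fun e f => (e ∈ M ↔ f ∉ M)) p.edges ∧
    ¬ Matched M a ∧ ¬ Matched M b

/-- An `M`-alternating cycle rooted at `v`: a closed walk at `v` of odd length with pairwise
distinct edges, visiting no vertex other than `v` twice, whose edges alternate between not
in `M` and in `M`, beginning and ending with edges not in `M` (the `i`-th edge lies in `M`
exactly when `i` is odd). -/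
def IsAltCycle {V : Type*} (G : SimpleGraph V) (M : Set (Sym2 V)) {v : V}
    (c : G.Walk v v) : Prop :=
  c.IsCycle ∧ Odd c.length ∧
    ∀ (i : ℕ) (h : i < c.edges.length), (c.edges.get ⟨i, h⟩ ∈ M ↔ Odd i)


open SimpleGraph in
/-- every internal vertex of an alternating walk is matched -/
lemma internal_matched {V : Type*} {G : SimpleGraph V} (M : Set (Sym2 V)) :
    ∀ {a b : V} (w : G.Walk a b), List.Chain' (fun e f => (e ∈ M ↔ f ∉ M)) w.edges →
      ∀ v ∈ w.support, v ≠ a → v ≠ b → Matched M v := by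
  intro a b w
  induction w with
  | nil =>
    intro _ v hv hva _
    simp only [Walk.support_nil, List.mem_singleton] at hv
    exact absurd hv hva
  | @cons a c b h q ih =>
    intro hchain v hv hva hvb
    rw [Walk.support_cons, List.mem_cons] at hv
    rcases hv with rfl | hv
    · exact absurd rfl hva
    · cases q with
      | nil =>
        simp only [Walk.support_nil, List.mem_singleton] at hv
        exact absurd hv hvb
      | @cons c d b h' q' =>
        rw [Walk.edges_cons, Walk.edges_cons] at hchain
        obtain ⟨halt, hchain'⟩ := List.isChain_cons_cons.mp hchain
        by_cases hvc : v = c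
        · subst hvc
          by_cases hm : s(a, v) ∈ M
          · exact ⟨_, hm, Sym2.mem_mk_right a v⟩
          · refine ⟨s(v, d), ?_, Sym2.mem_mk_left v d⟩
            by_contra hno
            exact hm (halt.mpr hno)
        · exact ih (by rw [Walk.edges_cons]; exact hchain') v hv hvc hvb

/-- alternating chain starting unmatched: parity of membership -/
lemma chain_parity {α : Type*} (M : Set α) (l : List α)
    (hc : List.Chain' (fun e f => (e ∈ M ↔ f ∉ M)) l)
    (h0 : ∀ (h : 0 < l.length), l[0] ∉ M) :
    ∀ (i : ℕ) (h : i < l.length), (l[i] ∈ M ↔ Odd i) := by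
  intro i
  induction i with
  | zero =>
    intro h
    exact iff_of_false (h0 h) (by simp [Nat.odd_iff])
  | succ n ihn =>
    intro h
    have hn : n < l.length := by omega
    have hrel := List.isChain_iff_getElem.mp hc n (by omega)
    have h1 := ihn hn
    rw [Nat.odd_iff] at h1 ⊢
    constructor
    · intro hm
      have hnm : l[n] ∉ M := fun hh => (hrel.mp hh) hm
      have : ¬ (n % 2 = 1) := fun hh => hnm (h1.mpr hh)
      omega
    · intro hodd
      by_contra hno
      have hnm : l[n] ∈ M := hrel.mpr hno
      have := h1.mp hnm
      omega

open SimpleGraph in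
/-- a closed walk with nodup support is nil -/
lemma length_eq_zero_of_closed_nodup {V : Type*} {G : SimpleGraph V} {u : V}
    (r : G.Walk u u) (h : r.support.Nodup) : r.length = 0 := by
  cases r with
  | nil => rfl
  | cons h' q =>
    exfalso
    rw [Walk.support_cons, List.nodup_cons] at h
    exact h.1 q.end_mem_support

lemma midget {α : Type*} (a b : α) (t : List α) (i : ℕ) (h1 : 1 ≤ i) (h2 : i - 1 < t.length) :
    (a :: (t ++ [b]))[i]'(by simp; omega) = t[i-1] := by
  obtain ⟨j, rfl⟩ : ∃ j, i = j + 1 := ⟨i - 1, by omega⟩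
  have h3 : j < t.length := h2
  simp only [List.getElem_cons_succ]
  rw [List.getElem_append_left h3]
  congr 1

lemma lastget {α : Type*} (a b : α) (t : List α) :
    (a :: (t ++ [b]))[t.length + 1]'(by simp) = b := by simp


theorem crown_altCycle_of_augPath {V : Type*} [Fintype V] (G : SimpleGraph V)
    (Mh : Set (Sym2 (V ⊕ V ⊕ V))) (hMh : IsMatching (crown G) Mh) (hreg : IsRegal Mh)
    (m : V) (hm : ¬ Matched Mh (Sum.inr (Sum.inr m)))
    (h : ∃ (a b : V ⊕ V ⊕ V) (p : (crown G).Walk a b), IsAugPath (crown G) Mh p) :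
    ∃ c : (crown G).Walk (Sum.inr (Sum.inr m)) (Sum.inr (Sum.inr m)),
      IsAltCycle (crown G) Mh c := by
  classical
  obtain ⟨a, b, p, hP, hNE, hchain, ha, hb⟩ := h
  obtain ⟨x, rfl⟩ : ∃ x, a = Sum.inr (Sum.inr x) := by
    rcases a with u | u | u
    · exact absurd (hreg.1 u) ha
    · exact absurd (hreg.2 u) ha
    · exact ⟨u, rfl⟩
  obtain ⟨y, rfl⟩ : ∃ y, b = Sum.inr (Sum.inr y) := by
    rcases b with u | u | u
    · exact absurd (hreg.1 u) hb
    · exact absurd (hreg.2 u) hb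
    · exact ⟨u, rfl⟩
  have hab : (Sum.inr (Sum.inr x) : V ⊕ V ⊕ V) ≠ Sum.inr (Sum.inr y) := by
    intro heq
    have hxy : x = y := by simpa using heq
    subst hxy
    exact hNE (by rw [(SimpleGraph.Walk.isPath_iff_eq_nil).mp hP]; rfl)
  obtain ⟨c₁, h₀, q, rfl⟩ := SimpleGraph.Walk.exists_eq_cons_of_ne hab p
  obtain ⟨u₁, rfl⟩ : ∃ u, c₁ = Sum.inr (Sum.inl u) := by
    rcases c₁ with w | w | w
    · exact absurd h₀ (fun hh => hh.elim)
    · exact ⟨w, rfl⟩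
    · exact absurd h₀ (fun hh => hh.elim)
  cases q with
  | cons h₁' q' =>
  obtain ⟨c₂, r, h₁, hq⟩ := SimpleGraph.Walk.exists_cons_eq_concat h₁' q'
  rw [hq] at hP hNE hchain
  clear hq
  obtain ⟨u₂, rfl⟩ : ∃ u, c₂ = Sum.inr (Sum.inl u) := by
    rcases c₂ with w | w | w
    · exact absurd h₁ (fun hh => hh.elim)
    · exact ⟨w, rfl⟩
    · exact absurd h₁ (fun hh => hh.elim)
  have hadj0 : (crown G).Adj (Sum.inr (Sum.inr m)) (Sum.inr (Sum.inl u₁)) := trivial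
  have hadj1 : (crown G).Adj (Sum.inr (Sum.inl u₂)) (Sum.inr (Sum.inr m)) := trivial
  -- support and edges of p
  have hps : (SimpleGraph.Walk.cons h₀ (r.concat h₁)).support = (Sum.inr (Sum.inr x)) :: (r.support ++ [(Sum.inr (Sum.inr y))]) := by
    rw [SimpleGraph.Walk.support_cons, SimpleGraph.Walk.support_concat]
  have hpe : (SimpleGraph.Walk.cons h₀ (r.concat h₁)).edges
      = s((Sum.inr (Sum.inr x)), (Sum.inr (Sum.inl u₁))) :: (r.edges ++ [s((Sum.inr (Sum.inl u₂)), (Sum.inr (Sum.inr y)))]) := by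
    rw [SimpleGraph.Walk.edges_cons, SimpleGraph.Walk.edges_concat, List.concat_eq_append]
  have hce : (SimpleGraph.Walk.cons hadj0 (r.concat hadj1)).edges
      = s((Sum.inr (Sum.inr m)), (Sum.inr (Sum.inl u₁))) :: (r.edges ++ [s((Sum.inr (Sum.inl u₂)), (Sum.inr (Sum.inr m)))]) := by
    rw [SimpleGraph.Walk.edges_cons, SimpleGraph.Walk.edges_concat, List.concat_eq_append]
  have hcs : (SimpleGraph.Walk.cons hadj0 (r.concat hadj1)).support
      = (Sum.inr (Sum.inr m)) :: (r.support ++ [(Sum.inr (Sum.inr m))]) := by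
    rw [SimpleGraph.Walk.support_cons, SimpleGraph.Walk.support_concat]
  -- nodup facts from p being a path
  have hnodup := hP.support_nodup
  rw [hps, List.nodup_cons] at hnodup
  obtain ⟨hAnot, hnd⟩ := hnodup
  rw [List.nodup_append] at hnd
  have hrnodup : r.support.Nodup := hnd.1
  have hBnot : (Sum.inr (Sum.inr y)) ∉ r.support := fun hB => hnd.2.2 _ hB _ (List.mem_singleton_self (Sum.inr (Sum.inr y))) rfl
  have hAnotr : (Sum.inr (Sum.inr x)) ∉ r.support := fun hh => hAnot (List.mem_append_left _ hh)
  have hedn := hP.isTrail.edges_nodup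
  rw [hpe, List.nodup_cons, List.nodup_append] at hedn
  have hre : r.edges.Nodup := hedn.2.1
  -- (Sum.inr (Sum.inr m)) is not on r
  have hMv_not : (Sum.inr (Sum.inr m)) ∉ r.support := by
    intro hmem
    rcases Classical.em ((Sum.inr (Sum.inr m) : V ⊕ V ⊕ V) = (Sum.inr (Sum.inr x))) with hMA | hMA
    · rw [hMA] at hmem; exact hAnotr hmem
    rcases Classical.em ((Sum.inr (Sum.inr m) : V ⊕ V ⊕ V) = (Sum.inr (Sum.inr y))) with hMB | hMB
    · rw [hMB] at hmem; exact hBnot hmem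
    refine hm (internal_matched Mh _ hchain (Sum.inr (Sum.inr m)) ?_ hMA hMB)
    rw [hps]
    exact List.mem_cons_of_mem _ (List.mem_append_left _ hmem)
  have hE0r : s((Sum.inr (Sum.inr m)), (Sum.inr (Sum.inl u₁))) ∉ r.edges := fun he => hMv_not (r.fst_mem_support_of_mem_edges he)
  have hE1r : s((Sum.inr (Sum.inl u₂)), (Sum.inr (Sum.inr m))) ∉ r.edges := fun he => hMv_not (r.snd_mem_support_of_mem_edges he)
  -- unmatched edges
  have hE0p : s((Sum.inr (Sum.inr x)), (Sum.inr (Sum.inl u₁))) ∉ Mh := fun hE => ha ⟨_, hE, Sym2.mem_mk_left _ _⟩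
  have hE1p : s((Sum.inr (Sum.inl u₂)), (Sum.inr (Sum.inr y))) ∉ Mh := fun hE => hb ⟨_, hE, Sym2.mem_mk_right _ _⟩
  have hE0c : s((Sum.inr (Sum.inr m)), (Sum.inr (Sum.inl u₁))) ∉ Mh := fun hE => hm ⟨_, hE, Sym2.mem_mk_left _ _⟩
  have hE1c : s((Sum.inr (Sum.inl u₂)), (Sum.inr (Sum.inr m))) ∉ Mh := fun hE => hm ⟨_, hE, Sym2.mem_mk_right _ _⟩
  -- parity along p
  have hpar := chain_parity Mh _ hchain (by
    intro hh
    simp only [hpe]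
    simpa using hE0p)
  have hrel : r.edges.length = r.length := SimpleGraph.Walk.length_edges r
  have hplen : (SimpleGraph.Walk.cons h₀ (r.concat h₁)).edges.length = r.length + 2 := by
    rw [hpe]; simp [hrel]
  have hodd_r : Odd r.length := by
    have h2 : r.length + 1 < (SimpleGraph.Walk.cons h₀ (r.concat h₁)).edges.length := by omega
    have hlastv := hpar (r.length + 1) h2
    have hgl : (SimpleGraph.Walk.cons h₀ (r.concat h₁)).edges[r.length + 1]'h2 = s((Sum.inr (Sum.inl u₂)), (Sum.inr (Sum.inr y))) := by
      have hl := lastget (s((Sum.inr (Sum.inr x)), (Sum.inr (Sum.inl u₁)))) (s((Sum.inr (Sum.inl u₂)), (Sum.inr (Sum.inr y)))) r.edges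
      simp only [hrel] at hl
      simp only [hpe]
      exact hl
    rw [hgl] at hlastv
    have hno : ¬ Odd (r.length + 1) := fun ho => hE1p (hlastv.mpr ho)
    rw [Nat.odd_iff] at hno ⊢
    omega
  have hC12 : (Sum.inr (Sum.inl u₁) : V ⊕ V ⊕ V) ≠ (Sum.inr (Sum.inl u₂)) := by
    intro he
    have : u₁ = u₂ := by simpa using he
    subst this
    have := length_eq_zero_of_closed_nodup r hrnodup
    rw [Nat.odd_iff] at hodd_r
    omega
  refine ⟨SimpleGraph.Walk.cons hadj0 (r.concat hadj1), ?_, ?_, ?_⟩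
  · -- IsCycle
    refine ⟨⟨⟨?_⟩, by simp⟩, ?_⟩
    · -- edges nodup
      rw [hce, List.nodup_cons]
      constructor
      · intro hmem
        rcases List.mem_append.mp hmem with hmem | hmem
        · exact hE0r hmem
        · rw [List.mem_singleton] at hmem
          rw [Sym2.eq_iff] at hmem
          rcases hmem with ⟨h1, h2⟩ | ⟨h1, h2⟩
          · exact absurd h1 (by simp)
          · exact hC12 h2
      · rw [List.nodup_append]
        refine ⟨hre, List.nodup_singleton _, ?_⟩
        intro e he f hee
        rw [List.mem_singleton] at hee
        subst hee
        exact fun hef => hE1r (hef ▸ he)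
    · -- support tail nodup
      rw [hcs]
      simp only [List.tail_cons]
      rw [List.nodup_append]
      exact ⟨hrnodup, List.nodup_singleton _, fun v hv w hv2 => by
        rw [List.mem_singleton] at hv2; subst hv2; exact fun hvw => hMv_not (hvw ▸ hv)⟩
  · -- odd length
    have : (SimpleGraph.Walk.cons hadj0 (r.concat hadj1)).length = r.length + 2 := by
      rw [SimpleGraph.Walk.length_cons, SimpleGraph.Walk.length_concat]
    rw [this, Nat.odd_iff]
    rw [Nat.odd_iff] at hodd_r
    omega
  · -- parity
    intro i hi
    rw [List.get_eq_getElem]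
    have hclen : (SimpleGraph.Walk.cons hadj0 (r.concat hadj1)).edges.length = r.length + 2 := by
      rw [hce]; simp [hrel]
    by_cases hi0 : i = 0
    · subst hi0
      have : (SimpleGraph.Walk.cons hadj0 (r.concat hadj1)).edges[0]'hi = s((Sum.inr (Sum.inr m)), (Sum.inr (Sum.inl u₁))) := by
        simp [hce]
      rw [this]
      exact iff_of_false hE0c (by simp [Nat.odd_iff])
    by_cases hilast : i = r.length + 1
    · subst hilast
      have : (SimpleGraph.Walk.cons hadj0 (r.concat hadj1)).edges[r.length + 1]'hi
          = s((Sum.inr (Sum.inl u₂)), (Sum.inr (Sum.inr m))) := by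
        have hl := lastget (s((Sum.inr (Sum.inr m)), (Sum.inr (Sum.inl u₁)))) (s((Sum.inr (Sum.inl u₂)), (Sum.inr (Sum.inr m)))) r.edges
        simp only [hrel] at hl
        simp only [hce]
        exact hl
      rw [this]
      refine iff_of_false hE1c ?_
      rw [Nat.odd_iff] at hodd_r ⊢
      omega
    · have h1 : 1 ≤ i := by omega
      have hile : i < r.length + 2 := by omega
      have h2 : i - 1 < r.edges.length := by omega
      have e1 : (SimpleGraph.Walk.cons hadj0 (r.concat hadj1)).edges[i]'hi
          = r.edges[i-1]'h2 := by
        simp only [hce]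
        exact midget _ _ _ _ h1 h2
      have hip : i < (SimpleGraph.Walk.cons h₀ (r.concat h₁)).edges.length := by omega
      have e2 : (SimpleGraph.Walk.cons h₀ (r.concat h₁)).edges[i]'hip
          = r.edges[i-1]'h2 := by
        simp only [hpe]
        exact midget _ _ _ _ h1 h2
      rw [e1, ← e2]
      exact hpar i hip
end
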